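/- If H is a connected cubical graph that is not layered, then the subgraph of Q_n consisting of the union of all even edge layers of Q_n contains no subgraph isomorphic to H; consequently ex(Q_n, H) ≥ n·2^{n-2} for every n, so H has positive Turán density in the hypercube. -/

import Mathlib

open SimpleGraph

/-- The hypercube graph `Q_n`: vertices are subsets of `[n]`, adjacent iff one contains the
other and their sizes differ by one. -/
def hypercube (n : ℕ) : SimpleGraph (Finset (Fin n)) where
  Adj A B := (A ⊆ B ∧ B.card = A.card + 1) ∨ (B ⊆ A ∧ A.card = B.card + 1)
  symm := ⟨fun A B h => h.symm⟩
  loopless := ⟨by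
    intro A h
    rcases h with ⟨-, h⟩ | ⟨-, h⟩ <;> omega⟩

/-- `G` contains a copy of `H`, i.e. `H` is isomorphic to a subgraph of `G`. -/
def ContainsCopy {α β : Type*} (G : SimpleGraph α) (H : SimpleGraph β) : Prop :=
  ∃ f : β → α, Function.Injective f ∧ ∀ u v, H.Adj u v → G.Adj (f u) (f v)

/-- A graph is cubical if it is isomorphic to a subgraph of a hypercube. -/
def IsCubical {V : Type*} (G : SimpleGraph V) : Prop :=
  ∃ n : ℕ, ContainsCopy (hypercube n) G

/-- A graph is layered if it is isomorphic to a subgraph of an edge layer of a hypercube. -/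
def IsLayered {V : Type*} (G : SimpleGraph V) : Prop :=
  ∃ (n k : ℕ) (f : V → Finset (Fin n)), Function.Injective f ∧
    (∀ v, (f v).card = k ∨ (f v).card + 1 = k) ∧
    ∀ u v, G.Adj u v → (hypercube n).Adj (f u) (f v)

/-- The number of edges of a graph. -/
noncomputable def numEdges {V : Type*} (G : SimpleGraph V) : ℕ := Nat.card G.edgeSet

/-- The union of all even edge layers of `Q_n`: an edge of `Q_n` between layers `k-1` and `k`
is kept exactly when `k` is even. -/
def evenLayers (n : ℕ) : SimpleGraph (Finset (Fin n)) where
  Adj A B := (hypercube n).Adj A B ∧ Even (max A.card B.card)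
  symm := ⟨fun A B h => ⟨(hypercube n).symm.symm _ _ h.1, by rw [max_comm]; exact h.2⟩⟩
  loopless := ⟨fun A h => (hypercube n).loopless.irrefl A h.1⟩

/-- Round a natural number up to an even value. -/
def roundEven (c : ℕ) : ℕ := if Even c then c else c + 1

lemma roundEven_eq_of_adj {n : ℕ} {A B : Finset (Fin n)} (h : (evenLayers n).Adj A B) :
    roundEven A.card = roundEven B.card := by
  obtain ⟨hadj, heven⟩ := h
  rcases hadj with ⟨hsub, hc⟩ | ⟨hsub, hc⟩
  · have hm : max A.card B.card = B.card := max_eq_right (by omega)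
    rw [hm] at heven
    have hA : ¬ Even A.card := by
      rw [hc] at heven
      exact Nat.even_add_one.mp heven
    simp only [roundEven, if_neg hA, if_pos heven]
    omega
  · have hm : max A.card B.card = A.card := max_eq_left (by omega)
    rw [hm] at heven
    have hB : ¬ Even B.card := by
      rw [hc] at heven
      exact Nat.even_add_one.mp heven
    simp only [roundEven, if_pos heven, if_neg hB]
    omega

lemma walk_roundEven {β : Type*} {H : SimpleGraph β} {n : ℕ} {f : β → Finset (Fin n)}
    (hadj : ∀ u v, H.Adj u v → (evenLayers n).Adj (f u) (f v)) :
    ∀ {u v : β}, H.Walk u v → roundEven (f u).card = roundEven (f v).card := by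
  intro u v p
  induction p with
  | nil => rfl
  | cons h p ih => exact (roundEven_eq_of_adj (hadj _ _ h)).trans ih

/-- A connected graph that embeds into the even layers is layered. -/
lemma layered_of_copy_evenLayers {β : Type*} {H : SimpleGraph β} (hconn : H.Connected)
    {n : ℕ} (h : ContainsCopy (evenLayers n) H) : IsLayered H := by
  obtain ⟨f, hinj, hadj⟩ := h
  obtain ⟨v0⟩ := hconn.nonempty
  refine ⟨n, roundEven (f v0).card, f, hinj, ?_, fun u v huv => (hadj u v huv).1⟩
  intro v
  obtain ⟨p⟩ := hconn.preconnected v v0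
  have hre := walk_roundEven hadj p
  by_cases hE : Even (f v).card
  · left; rw [← hre]; simp [roundEven, hE]
  · right; rw [← hre]; simp [roundEven, hE]

/-- A graph that embeds into `Q_1` is layered. -/
lemma layered_of_copy_hypercube_one {β : Type*} {H : SimpleGraph β}
    (h : ContainsCopy (hypercube 1) H) : IsLayered H := by
  obtain ⟨f, hinj, hadj⟩ := h
  refine ⟨1, 1, f, hinj, ?_, hadj⟩
  intro v
  have h1 : (f v).card ≤ 1 := by
    have := Finset.card_le_univ (f v)
    simpa using this
  omega

/-- The number of odd-cardinality subsets of `insert a s` is `2 ^ s.card`. -/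
lemma card_odd_powerset_insert {α : Type*} [DecidableEq α] {a : α} {s : Finset α}
    (ha : a ∉ s) :
    ((insert a s).powerset.filter fun A => Odd A.card).card = 2 ^ s.card := by
  rw [Finset.powerset_insert, Finset.filter_union]
  have himg : ((s.powerset.image (insert a)).filter fun A => Odd A.card)
      = (s.powerset.filter fun A => ¬ Odd A.card).image (insert a) := by
    rw [Finset.filter_image]
    congr 1
    apply Finset.filter_congr
    intro A hA
    simp only [Finset.mem_powerset] at hA
    have haA : a ∉ A := fun h => ha (hA h)
    rw [Finset.card_insert_of_notMem haA]
    simp [Nat.odd_add_one]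
  have hdisj : Disjoint (s.powerset.filter fun A => Odd A.card)
      ((s.powerset.image (insert a)).filter fun A => Odd A.card) := by
    rw [Finset.disjoint_left]
    intro A h1 h2
    simp only [Finset.mem_filter, Finset.mem_powerset, Finset.mem_image] at h1 h2
    obtain ⟨⟨B, hB, rfl⟩, -⟩ := h2
    exact ha (h1.1 (Finset.mem_insert_self a B))
  have hinjOn : Set.InjOn (insert a) ((s.powerset.filter fun A => ¬ Odd A.card : Finset (Finset α)) : Set (Finset α)) := by
    intro A hA B hB hAB
    simp only [Finset.coe_filter, Set.mem_setOf_eq, Finset.mem_powerset] at hA hB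
    have haA : a ∉ A := fun h => ha (hA.1 h)
    have haB : a ∉ B := fun h => ha (hB.1 h)
    rw [← Finset.erase_insert haA, ← Finset.erase_insert haB, hAB]
  rw [Finset.card_union_of_disjoint hdisj, himg, Finset.card_image_of_injOn hinjOn,
    Finset.card_filter_add_card_filter_not, Finset.card_powerset]

lemma card_odd_powerset_erase {n : ℕ} (hn : 2 ≤ n) (i : Fin n) :
    (((Finset.univ : Finset (Fin n)).erase i).powerset.filter fun A => Odd A.card).card
      = 2 ^ (n - 2) := by
  have hcard : ((Finset.univ : Finset (Fin n)).erase i).card = n - 1 := by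
    rw [Finset.card_erase_of_mem (Finset.mem_univ i)]
    simp
  have hne : ((Finset.univ : Finset (Fin n)).erase i).Nonempty := by
    rw [← Finset.card_pos, hcard]; omega
  obtain ⟨a, ha⟩ := hne
  have h2 : (Finset.univ : Finset (Fin n)).erase i
      = insert a (((Finset.univ : Finset (Fin n)).erase i).erase a) :=
    (Finset.insert_erase ha).symm
  rw [h2, card_odd_powerset_insert (Finset.notMem_erase a _),
    Finset.card_erase_of_mem ha, hcard]
  congr 1

lemma evenLayers_edge_count {n : ℕ} (hn : 2 ≤ n) :
    n * 2 ^ (n - 2) ≤ numEdges (evenLayers n) := by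
  classical
  set S : Fin n → Finset (Finset (Fin n)) :=
    fun i => ((Finset.univ : Finset (Fin n)).erase i).powerset.filter fun A => Odd A.card
    with hS
  have hmem : ∀ (i : Fin n) (A : Finset (Fin n)), A ∈ S i →
      s(A, insert i A) ∈ (evenLayers n).edgeSet := by
    intro i A hA
    simp only [hS, Finset.mem_filter, Finset.mem_powerset] at hA
    obtain ⟨hsub, hodd⟩ := hA
    have hiA : i ∉ A := (Finset.subset_erase.mp hsub).2
    have hcard : (insert i A).card = A.card + 1 := Finset.card_insert_of_notMem hiA
    rw [SimpleGraph.mem_edgeSet]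
    refine ⟨Or.inl ⟨Finset.subset_insert i A, hcard⟩, ?_⟩
    rw [hcard, max_eq_right (Nat.le_succ _)]
    exact hodd.add_one
  let F : (Σ i : Fin n, {A // A ∈ S i}) → (evenLayers n).edgeSet :=
    fun p => ⟨s(p.2.1, insert p.1 p.2.1), hmem p.1 p.2.1 p.2.2⟩
  have hinfo : ∀ (i : Fin n) (A : Finset (Fin n)), A ∈ S i → i ∉ A ∧ Odd A.card := by
    intro i A hA
    simp only [hS, Finset.mem_filter, Finset.mem_powerset] at hA
    exact ⟨(Finset.subset_erase.mp hA.1).2, hA.2⟩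
  have hinj : Function.Injective F := by
    rintro ⟨i, A, hA⟩ ⟨j, B, hB⟩ h
    obtain ⟨hiA, hoA⟩ := hinfo i A hA
    obtain ⟨hjB, hoB⟩ := hinfo j B hB
    simp only [F, Subtype.mk.injEq, Sym2.eq_iff] at h
    rcases h with ⟨hAB, hins⟩ | ⟨h1, h2⟩
    · subst hAB
      have hij : i = j := by
        have hi : i ∈ insert j A := hins ▸ Finset.mem_insert_self i A
        rcases Finset.mem_insert.mp hi with h | h
        · exact h
        · exact absurd h hiA
      subst hij
      rfl
    · exfalso
      rw [h1, Finset.card_insert_of_notMem hjB] at hoA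
      exact (Nat.odd_add_one.mp hoA) hoB
  have hle := Nat.card_le_card_of_injective F hinj
  have hcardsig : Nat.card (Σ i : Fin n, {A // A ∈ S i}) = n * 2 ^ (n - 2) := by
    rw [Nat.card_eq_fintype_card, Fintype.card_sigma]
    have : ∀ i : Fin n, Fintype.card {A // A ∈ S i} = 2 ^ (n - 2) := by
      intro i
      rw [Fintype.card_coe, hS]
      exact card_odd_powerset_erase hn i
    simp only [this, Finset.sum_const, Finset.card_univ, Fintype.card_fin, smul_eq_mul]
  rw [hcardsig] at hle
  exact hle

/-- If `H` is a connected cubical graph that is not layered, then the union of the even edge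
layers of `Q_n` contains no copy of `H`; consequently `ex(Q_n, H) ≥ n·2^(n-2)`, so `H` has
positive Turán density in the hypercube. -/
theorem not_layered_positive_density {β : Type} (H : SimpleGraph β) (hconn : H.Connected)
    (hcub : IsCubical H) (hlay : ¬ IsLayered H) (n : ℕ) :
    ¬ ContainsCopy (evenLayers n) H ∧
    ∃ G : SimpleGraph (Finset (Fin n)), G ≤ hypercube n ∧ ¬ ContainsCopy G H ∧
      n * 2 ^ (n - 2) ≤ numEdges G := by
  refine ⟨fun h => hlay (layered_of_copy_evenLayers hconn h), ?_⟩
  rcases Nat.lt_or_ge n 2 with h2 | h2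
  · interval_cases n
    · exact ⟨evenLayers 0, fun _ _ h => h.1,
        fun h => hlay (layered_of_copy_evenLayers hconn h), by simp⟩
    · refine ⟨hypercube 1, le_rfl, fun h => hlay (layered_of_copy_hypercube_one h), ?_⟩
      have hedge : s((∅ : Finset (Fin 1)), {0}) ∈ (hypercube 1).edgeSet := by
        rw [SimpleGraph.mem_edgeSet]
        exact Or.inl ⟨Finset.empty_subset _, by simp⟩
      have : Nonempty ((hypercube 1).edgeSet) := ⟨⟨_, hedge⟩⟩
      have hpos : 1 ≤ numEdges (hypercube 1) := Nat.card_pos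
      simpa using hpos
  · exact ⟨evenLayers n, fun _ _ h => h.1,
      fun h => hlay (layered_of_copy_evenLayers hconn h), evenLayers_edge_count h2⟩
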